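/- arXiv:1505.03369 — 4 statements merged into one kernel-verified Lean document; each statement's English description precedes it below -/
import Mathlib

section
/- Let K be the n×n Cartan matrix of SU(n+1), R = diag(i(n+1-i)/2)_{i=1}^n, P̃ = diag(n/(i(n+1-i)))_{i=1}^n, and S̃ = P̃^{-1} K R. Then S̃ is positive definite. -/
open Matrix

/-- The `n×n` Cartan matrix of `SU(n+1)`. -/
noncomputable def cartanSU (n : ℕ) : Matrix (Fin n) (Fin n) ℝ :=
  fun i j =>
    if i = j then 2
    else if (i : ℕ) + 1 = (j : ℕ) ∨ (j : ℕ) + 1 = (i : ℕ) then -1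
    else 0

/-- `R = diag(R_1, …, R_n)` with `R_i = i(n+1-i)/2` (1-indexed). -/
noncomputable def Rmat (n : ℕ) : Matrix (Fin n) (Fin n) ℝ :=
  Matrix.diagonal (fun i => ((i : ℝ) + 1) * ((n : ℝ) - (i : ℝ)) / 2)

/-- `P̃ = diag(P̃_1, …, P̃_n)` with `P̃_i = n/(i(n+1-i))` (1-indexed). -/
noncomputable def Pmat (n : ℕ) : Matrix (Fin n) (Fin n) ℝ :=
  Matrix.diagonal (fun i => (n : ℝ) / (((i : ℝ) + 1) * ((n : ℝ) - (i : ℝ))))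

/-- The `(n+1)×n` difference matrix `B` with `B_{i,i} = 1`, `B_{i+1,i} = -1`. -/
noncomputable def Bdiff (n : ℕ) : Matrix (Fin (n + 1)) (Fin n) ℝ :=
  fun k i => if (k : ℕ) = (i : ℕ) then 1 else if (k : ℕ) = (i : ℕ) + 1 then -1 else 0

lemma sum_ite_coe {N : ℕ} (m : ℕ) (f : Fin N → ℝ) :
    ∑ i : Fin N, (if (i : ℕ) = m then f i else 0) = if h : m < N then f ⟨m, h⟩ else 0 := by
  by_cases h : m < N
  · rw [dif_pos h, Finset.sum_eq_single ⟨m, h⟩]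
    · simp
    · intro b _ hb
      exact if_neg (by simpa [Fin.ext_iff] using hb)
    · simp
  · rw [dif_neg h]
    apply Finset.sum_eq_zero
    intro i _
    have hi := i.isLt
    exact if_neg (by omega)

lemma sum_ind {N : ℕ} (a b : ℕ) :
    ∑ k : Fin N, (if (k : ℕ) = a then (1 : ℝ) else 0) * (if (k : ℕ) = b then 1 else 0) =
      if a = b ∧ a < N then 1 else 0 := by
  by_cases hab : a = b
  · subst hab
    have h1 : ∀ k : Fin N,
        (if (k : ℕ) = a then (1 : ℝ) else 0) * (if (k : ℕ) = a then 1 else 0) =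
          if (k : ℕ) = a then (1 : ℝ) else 0 := by
      intro k; split_ifs <;> ring
    rw [Finset.sum_congr rfl (fun k _ => h1 k), sum_ite_coe a (fun _ => (1 : ℝ))]
    by_cases h : a < N <;> simp [h]
  · rw [if_neg (by tauto)]
    apply Finset.sum_eq_zero
    intro k _
    split_ifs <;> first | (exfalso; omega) | ring1

lemma cartan_eq (n : ℕ) : cartanSU n = (Bdiff n)ᵀ * Bdiff n := by
  ext i j
  have hB : ∀ (l : Fin n) (k : Fin (n + 1)),
      Bdiff n k l =
        (if (k : ℕ) = (l : ℕ) then (1 : ℝ) else 0) -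
          (if (k : ℕ) = (l : ℕ) + 1 then 1 else 0) := by
    intro l k
    unfold Bdiff
    split_ifs <;> first | (exfalso; omega) | ring1
  have hi := i.isLt
  have hj := j.isLt
  rw [Matrix.mul_apply]
  simp only [Matrix.transpose_apply, hB, sub_mul, mul_sub, Finset.sum_sub_distrib, sum_ind]
  unfold cartanSU
  simp only [Fin.ext_iff]
  split_ifs <;> first | (exfalso; omega) | norm_num

lemma Bdiff_mulVec_eq_zero {n : ℕ} {z : Fin n → ℝ} (hz : Bdiff n *ᵥ z = 0) : z = 0 := by
  have comp : ∀ k : Fin (n + 1), ∑ i, Bdiff n k i * z i = 0 := by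
    intro k
    have := congrFun hz k
    simpa [Matrix.mulVec, dotProduct] using this
  have key : ∀ m, ∀ h : m < n, z ⟨m, h⟩ = 0 := by
    intro m
    induction m with
    | zero =>
      intro h
      have h0 := comp ⟨0, Nat.succ_pos n⟩
      have hterm : ∀ i : Fin n, Bdiff n ⟨0, Nat.succ_pos n⟩ i * z i =
          if (i : ℕ) = 0 then z i else 0 := by
        intro i
        have hk0 : ((⟨0, Nat.succ_pos n⟩ : Fin (n + 1)) : ℕ) = 0 := rfl
        unfold Bdiff
        rw [hk0]
        split_ifs <;> first | (exfalso; omega) | ring1 | contradiction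
      rw [Finset.sum_congr rfl (fun i _ => hterm i), sum_ite_coe 0 z, dif_pos h] at h0
      exact h0
    | succ m ih =>
      intro h
      have hk : m + 1 < n + 1 := by omega
      have h0 := comp ⟨m + 1, hk⟩
      have hterm : ∀ i : Fin n, Bdiff n ⟨m + 1, hk⟩ i * z i =
          (if (i : ℕ) = m + 1 then z i else 0) + (if (i : ℕ) = m then -z i else 0) := by
        intro i
        have hk1 : ((⟨m + 1, hk⟩ : Fin (n + 1)) : ℕ) = m + 1 := rfl
        unfold Bdiff
        rw [hk1]
        split_ifs <;> first | (exfalso; omega) | ring1 | contradiction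
      rw [Finset.sum_congr rfl (fun i _ => hterm i), Finset.sum_add_distrib,
        sum_ite_coe (m + 1) z, sum_ite_coe m (fun i => -z i), dif_pos h,
        dif_pos (by omega : m < n)] at h0
      rw [ih (by omega)] at h0
      simpa using h0
  funext i
  have := key i.val i.isLt
  simpa using this

theorem Stilde_posDef (n : ℕ) (hn : 1 ≤ n) :
    ((Pmat n)⁻¹ * cartanSU n * Rmat n).PosDef := by
  have hnR : (0 : ℝ) < n := by exact_mod_cast hn
  set c : Fin n → ℝ := fun i => ((i : ℝ) + 1) * ((n : ℝ) - (i : ℝ)) with hc_def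
  have hc : ∀ i, 0 < c i := by
    intro i
    have hi : ((i : ℕ) : ℝ) < n := by exact_mod_cast i.isLt
    have h1 : (0 : ℝ) < (i : ℝ) + 1 := by positivity
    have h2 : (0 : ℝ) < (n : ℝ) - (i : ℝ) := by linarith
    exact mul_pos h1 h2
  set M : Matrix (Fin (n + 1)) (Fin n) ℝ := Bdiff n * Matrix.diagonal c with hM_def
  have hPinv : (Pmat n)⁻¹ = Matrix.diagonal (fun i => c i / n) := by
    apply Matrix.inv_eq_right_inv
    rw [Pmat, Matrix.diagonal_mul_diagonal]
    ext i j
    by_cases h : i = j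
    · subst h
      rw [Matrix.diagonal_apply_eq, Matrix.one_apply_eq]
      have h2 : ((i : ℝ) + 1) * ((n : ℝ) - (i : ℝ)) ≠ 0 := (hc i).ne'
      have hci : c i = ((i : ℝ) + 1) * ((n : ℝ) - (i : ℝ)) := rfl
      have hn' : (n : ℝ) ≠ 0 := hnR.ne'
      rw [hci]
      field_simp
      exact div_self (right_ne_zero_of_mul h2)
    · rw [Matrix.diagonal_apply_ne _ h, Matrix.one_apply_ne h]
  have hS : (Pmat n)⁻¹ * cartanSU n * Rmat n = ((2 * n : ℝ))⁻¹ • (Mᵀ * M) := by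
    have hMM : Mᵀ * M = Matrix.diagonal c * cartanSU n * Matrix.diagonal c := by
      rw [hM_def, Matrix.transpose_mul, Matrix.diagonal_transpose, cartan_eq]
      simp only [Matrix.mul_assoc]
    rw [hMM, hPinv, Rmat]
    ext i j
    rw [Matrix.mul_diagonal, Matrix.diagonal_mul, Matrix.smul_apply, Matrix.mul_diagonal,
      Matrix.diagonal_mul, smul_eq_mul]
    have hn' : (n : ℝ) ≠ 0 := hnR.ne'
    have key : ∀ a b k : ℝ, a / (n : ℝ) * k * (b / 2) = (2 * (n : ℝ))⁻¹ * (a * k * b) := by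
      intro a b k
      have h2n : (2 * (n : ℝ)) ≠ 0 := by positivity
      field_simp
    exact key _ _ _
  rw [hS]
  rw [Matrix.posDef_iff_dotProduct_mulVec]
  constructor
  · have h1 : (Mᵀ * M).IsHermitian := by
      have := Matrix.isHermitian_conjTranspose_mul_self M
      rwa [Matrix.conjTranspose_eq_transpose_of_trivial] at this
    show _ = _
    rw [Matrix.conjTranspose_smul, h1.eq, star_trivial]
  · intro x hx
    have hDx : Matrix.diagonal c *ᵥ x ≠ 0 := by
      intro h
      apply hx
      funext i
      have := congrFun h i
      rw [Matrix.mulVec_diagonal] at this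
      have := mul_eq_zero.mp this
      rcases this with h' | h'
      · exact absurd h' (hc i).ne'
      · exact h'
    have hy : M *ᵥ x ≠ 0 := by
      rw [hM_def, ← Matrix.mulVec_mulVec]
      intro h
      exact hDx (Bdiff_mulVec_eq_zero h)
    set y := M *ᵥ x with hy_def
    have hdot : star x ⬝ᵥ ((((2 * n : ℝ))⁻¹ • (Mᵀ * M)) *ᵥ x) = ((2 * n : ℝ))⁻¹ * (y ⬝ᵥ y) := by
      rw [Matrix.smul_mulVec, dotProduct_smul, ← Matrix.mulVec_mulVec,
        Matrix.dotProduct_mulVec, Matrix.vecMul_transpose]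
      simp [hy_def, smul_eq_mul]
    rw [hdot]
    have hyy : 0 < y ⬝ᵥ y := by
      obtain ⟨i, hi⟩ := Function.ne_iff.mp hy
      apply Finset.sum_pos' (fun j _ => mul_self_nonneg (y j))
      exact ⟨i, Finset.mem_univ i, mul_self_pos.mpr hi⟩
    have : (0 : ℝ) < (2 * n : ℝ)⁻¹ := by positivity
    exact mul_pos this hyy
end

section
/- Let K be a symmetric positive definite n×n real matrix, Ω a measure space of finite positive measure |Ω|, and U : Ω → ℝ^n a vector function with components U_i ≥ 0 integrable. Suppose ∫_Ω (RU)^T K R (U - 𝟏) dx + (4π/λ) 𝟏^T K^{-1} N = 0, where R is a diagonal positive matrix with K^{-1}𝟏 = R𝟏, λ > 0, and N ∈ ℝ^n has nonnegative entries not all zero. Then λ > 16π (𝟏^T K^{-1} N)/(|Ω| 𝟏^T K^{-1} 𝟏). -/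
open Matrix MeasureTheory Real

theorem necessary_condition_lambda
    {n : ℕ} (K : Matrix (Fin n) (Fin n) ℝ) (hK : K.PosDef)
    (R : Fin n → ℝ) (hRpos : ∀ i, 0 < R i)
    (hR1 : K⁻¹ *ᵥ (fun _ => (1 : ℝ)) = R)
    (lam : ℝ) (hlam : 0 < lam)
    (N : Fin n → ℝ) (hN : ∀ i, 0 ≤ N i) (hN0 : N ≠ 0)
    {Ω : Type*} [MeasurableSpace Ω] (μ : Measure Ω) [IsFiniteMeasure μ]
    (hμ : 0 < (μ Set.univ).toReal)
    (U : Ω → Fin n → ℝ) (hUnn : ∀ i, ∀ x, 0 ≤ U x i)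
    (hUint : ∀ i, Integrable (fun x => U x i) μ)
    (hquadint : Integrable (fun x =>
      (Matrix.diagonal R *ᵥ (U x - fun _ => (1 : ℝ) / 2)) ⬝ᵥ
        (K *ᵥ (Matrix.diagonal R *ᵥ (U x - fun _ => (1 : ℝ) / 2)))) μ)
    (hne : ¬ (U =ᵐ[μ] fun _ => fun _ => (1 : ℝ) / 2))
    (hconstraint :
      (∫ x, (Matrix.diagonal R *ᵥ U x) ⬝ᵥ
          (K *ᵥ (Matrix.diagonal R *ᵥ (U x - fun _ => (1 : ℝ)))) ∂μ)
        + (4 * π / lam) * ((fun _ => (1 : ℝ)) ⬝ᵥ (K⁻¹ *ᵥ N)) = 0) :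
    lam > 16 * π * ((fun _ => (1 : ℝ)) ⬝ᵥ (K⁻¹ *ᵥ N)) /
      ((μ Set.univ).toReal * ((fun _ => (1 : ℝ)) ⬝ᵥ (K⁻¹ *ᵥ fun _ => (1 : ℝ)))) := by
  classical
  have hn : 0 < n := Nat.pos_of_ne_zero (by rintro rfl; exact hN0 (funext fun i => i.elim0))
  set one : Fin n → ℝ := fun _ => (1 : ℝ) with hone
  set half : Fin n → ℝ := fun _ => (1 : ℝ) / 2 with hhalf
  have hKsymm : Kᵀ = K := hK.1
  have hKinv : (K⁻¹).PosDef := hK.inv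
  have hKinvsymm : (K⁻¹)ᵀ = K⁻¹ := hKinv.1
  have h1ne : one ≠ 0 := by
    intro h
    have := congrFun h ⟨0, hn⟩
    simp [hone] at this
  set c : ℝ := one ⬝ᵥ (K⁻¹ *ᵥ N) with hc
  set s : ℝ := one ⬝ᵥ (K⁻¹ *ᵥ one) with hs
  have hcR : c = R ⬝ᵥ N := by
    rw [hc, dotProduct_mulVec, ← mulVec_transpose, hKinvsymm, hR1]
  have hcpos : 0 < c := by
    rw [hcR]
    obtain ⟨i, hi⟩ : ∃ i, N i ≠ 0 := by
      by_contra h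
      push_neg at h
      exact hN0 (funext h)
    exact Finset.sum_pos' (fun j _ => mul_nonneg (hRpos j).le (hN j))
      ⟨i, Finset.mem_univ i, mul_pos (hRpos i) (lt_of_le_of_ne (hN i) (Ne.symm hi))⟩
  have hspos : 0 < s := by
    have := hKinv.dotProduct_mulVec_pos h1ne
    simpa [hs] using this
  set V : Ω → Fin n → ℝ := fun x => Matrix.diagonal R *ᵥ (U x - half) with hV
  set a : Fin n → ℝ := Matrix.diagonal R *ᵥ half with ha
  have hKR : K *ᵥ R = one := by
    rw [← hR1, mulVec_mulVec, Matrix.mul_nonsing_inv K hK.det_pos.ne'.isUnit, one_mulVec]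
  have haR : a = (1/2 : ℝ) • R := by
    funext i
    simp [ha, mulVec_diagonal, hhalf, mul_comm]
  have hCa : a ⬝ᵥ (K *ᵥ a) = s / 4 := by
    rw [haR, mulVec_smul, hKR, smul_dotProduct, dotProduct_smul]
    have hRone : R ⬝ᵥ one = s := by
      rw [hs, ← hR1, dotProduct_comm, dotProduct_mulVec, ← mulVec_transpose, hKinvsymm, hR1,
        dotProduct_comm]
    rw [hRone]; simp [smul_eq_mul]; ring
  -- symmetry of the bilinear form
  have hbil : ∀ u v : Fin n → ℝ, u ⬝ᵥ (K *ᵥ v) = v ⬝ᵥ (K *ᵥ u) := by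
    intro u v
    rw [dotProduct_mulVec, ← mulVec_transpose, hKsymm, dotProduct_comm]
  -- pointwise decomposition
  have hpt : ∀ x, (Matrix.diagonal R *ᵥ U x) ⬝ᵥ
      (K *ᵥ (Matrix.diagonal R *ᵥ (U x - one)))
      = V x ⬝ᵥ (K *ᵥ V x) - s / 4 := by
    intro x
    have h1 : Matrix.diagonal R *ᵥ U x = V x + a := by
      rw [hV, ha, ← mulVec_add]
      congr 1
      funext i
      simp [hhalf]
    have h2 : Matrix.diagonal R *ᵥ (U x - one) = V x - a := by
      have he : U x - one = (U x - half) - half := by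
        funext i; simp [hone, hhalf]; ring
      rw [hV, ha, he, mulVec_sub]
    rw [h1, h2, ← hCa]
    rw [mulVec_sub, dotProduct_sub, add_dotProduct, add_dotProduct]
    have := hbil a (V x)
    linarith [hbil a (V x)]
  -- positivity of f
  set f : Ω → ℝ := fun x => V x ⬝ᵥ (K *ᵥ V x) with hf
  have hfnn : ∀ x, 0 ≤ f x := by
    intro x
    by_cases h : V x = 0
    · simp [hf, h]
    · have := hK.dotProduct_mulVec_pos h
      simpa using this.le
  have hfint : Integrable f μ := hquadint
  have hfpos : 0 < ∫ x, f x ∂μ := by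
    rw [integral_pos_iff_support_of_nonneg hfnn hfint]
    rw [pos_iff_ne_zero]
    intro hsup
    apply hne
    have hae : ∀ᵐ x ∂μ, f x = 0 := by
      rw [ae_iff]
      simpa [Function.support] using hsup
    filter_upwards [hae] with x hx
    have hVx : V x = 0 := by
      by_contra h
      exact absurd hx (by simpa using (hK.dotProduct_mulVec_pos h).ne')
    funext i
    have hz : R i * (U x i - 1/2) = 0 := by
      simpa [hV, mulVec_diagonal, hhalf] using congrFun hVx i
    have h0 : U x i - 1/2 = 0 := by
      rcases mul_eq_zero.mp hz with h | h
      · exact absurd h (hRpos i).ne'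
      · exact h
    show U x i = half i
    simp [hhalf]; linarith
  -- integral decomposition
  have hint : (∫ x, (Matrix.diagonal R *ᵥ U x) ⬝ᵥ
      (K *ᵥ (Matrix.diagonal R *ᵥ (U x - one))) ∂μ)
      = (∫ x, f x ∂μ) - s / 4 * (μ Set.univ).toReal := by
    have : (fun x => (Matrix.diagonal R *ᵥ U x) ⬝ᵥ
        (K *ᵥ (Matrix.diagonal R *ᵥ (U x - one)))) = fun x => f x - s / 4 := by
      funext x
      exact hpt x
    rw [this, integral_sub hfint (integrable_const _), integral_const, smul_eq_mul, measureReal_def]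
    ring
  rw [hint] at hconstraint
  -- final arithmetic
  set M := (μ Set.univ).toReal with hM
  have hkey : 4 * π / lam * c < s / 4 * M := by
    nlinarith [hfpos]
  rw [gt_iff_lt, div_lt_iff₀ (by positivity : 0 < M * s)]
  have h4 : 4 * π / lam * c * lam = 4 * π * c := by
    field_simp
  nlinarith [mul_pos hμ hspos, hkey, mul_lt_mul_of_pos_right hkey hlam]
end

section
/- Let f : (0,∞) → ℝ be continuous, with lim_{t→0+} f(t) < 0, lim_{t→∞} f(t) = ∞, and satisfying: f is differentiable and f'(t) > f(t)/t for all t > 0. Then f has exactly one zero in (0,∞). -/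
open Filter

theorem exists_unique_zero (f f' : ℝ → ℝ) (L : ℝ) (hL : L < 0)
    (hcont : ContinuousOn f (Set.Ioi 0))
    (hlim0 : Tendsto f (nhdsWithin 0 (Set.Ioi 0)) (nhds L))
    (hlimtop : Tendsto f atTop atTop)
    (hderiv : ∀ t, 0 < t → HasDerivAt f (f' t) t)
    (hgt : ∀ t, 0 < t → f t / t < f' t) :
    ∃! t : ℝ, t ∈ Set.Ioi (0 : ℝ) ∧ f t = 0 := by
  -- g = f t / t is strictly monotone on Ioi 0
  have hg : StrictMonoOn (fun t => f t / t) (Set.Ioi 0) := by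
    apply StrictMonoOn.mono (s := Set.Ioi (0:ℝ)) ?_ le_rfl
    apply strictMonoOn_of_hasDerivWithinAt_pos (convex_Ioi 0)
      (fun t ht => ((hderiv t ht).continuousAt.continuousWithinAt).div
        continuousWithinAt_id (ne_of_gt ht))
    · intro t ht
      rw [interior_Ioi] at ht
      exact ((hderiv t ht).div (hasDerivAt_id t) (ne_of_gt ht)).hasDerivWithinAt
    · intro t ht
      rw [interior_Ioi] at ht
      have h1 : f t < f' t * t := by
        have := hgt t ht
        rw [div_lt_iff₀ ht] at this
        exact this
      simp only [id_eq]
      have ht0 : (0:ℝ) < t := ht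
      exact div_pos (by linarith) (by positivity)
  -- f is negative somewhere near 0
  have hneg : ∃ a > 0, f a < 0 := by
    have : ∀ᶠ t in nhdsWithin 0 (Set.Ioi 0), f t < 0 := by
      exact hlim0.eventually (eventually_lt_nhds hL)
    obtain ⟨a, ha1, ha2⟩ := (this.and self_mem_nhdsWithin).exists
    exact ⟨a, ha2, ha1⟩
  obtain ⟨a, ha, hfa⟩ := hneg
  -- f is positive somewhere large
  obtain ⟨b, hb⟩ := (hlimtop.eventually_gt_atTop 0).and (eventually_gt_atTop a) |>.exists
  obtain ⟨hfb, hab⟩ := hb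
  have hb0 : 0 < b := lt_trans ha hab
  -- IVT
  have hsub : Set.Icc a b ⊆ Set.Ioi 0 := fun x hx => lt_of_lt_of_le ha hx.1
  have : (0:ℝ) ∈ Set.Icc (f a) (f b) := ⟨le_of_lt hfa, le_of_lt hfb⟩
  obtain ⟨c, hc, hfc⟩ := intermediate_value_Icc (le_of_lt hab) (hcont.mono hsub) this
  have hc0 : 0 < c := lt_of_lt_of_le ha hc.1
  refine ⟨c, ⟨hc0, hfc⟩, ?_⟩
  rintro y ⟨hy, hfy⟩
  -- uniqueness via strict monotonicity of g
  have hgc : f c / c = 0 := by rw [hfc]; simp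
  have hgy : f y / y = 0 := by rw [hfy]; simp
  by_contra hne
  rcases lt_or_gt_of_ne hne with h | h
  · have := hg hy hc0 h
    simp only [hgc, hgy] at this
    exact lt_irrefl 0 this
  · have := hg hc0 hy h
    simp only [hgc, hgy] at this
    exact lt_irrefl 0 this
end

section
/- Let (Ω, μ) be a finite measure space, u : Ω → ℝ measurable, λ > 0, b > 0, and s ∈ (0,1). Suppose (∫ e^u dμ)^2 ≥ (4nb/λ) ∫ e^{2u} dμ for some n ≥ 1, and all integrals are finite. Then ∫ e^u dμ ≤ (λ/(4nb))^{(1-s)/s} (∫ e^{su} dμ)^{1/s}. -/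
open MeasureTheory Real

theorem exp_integral_interpolation_bound
    {Ω : Type*} [MeasurableSpace Ω] (μ : Measure Ω) [IsFiniteMeasure μ]
    (u : Ω → ℝ) (hu : Measurable u)
    (n : ℕ) (hn : 1 ≤ n) (lam b : ℝ) (hlam : 0 < lam) (hb : 0 < b)
    (s : ℝ) (hs0 : 0 < s) (hs1 : s < 1)
    (heu : Integrable (fun x => exp (u x)) μ)
    (he2u : Integrable (fun x => exp (2 * u x)) μ)
    (hesu : Integrable (fun x => exp (s * u x)) μ)
    (hconstraint : (4 * n * b / lam) * ∫ x, exp (2 * u x) ∂μ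
        ≤ (∫ x, exp (u x) ∂μ) ^ 2) :
    ∫ x, exp (u x) ∂μ
      ≤ (lam / (4 * n * b)) ^ ((1 - s) / s) * (∫ x, exp (s * u x) ∂μ) ^ (1 / s) := by
  set I := ∫ x, exp (u x) ∂μ with hI
  set A := ∫ x, exp (s * u x) ∂μ with hA
  set B := ∫ x, exp (2 * u x) ∂μ with hB
  have hn' : (1:ℝ) ≤ (n:ℝ) := by exact_mod_cast hn
  have hC : 0 < lam / (4 * n * b) := by positivity
  have hI0 : 0 ≤ I := integral_nonneg fun x => (exp_pos _).le
  have hA0 : 0 ≤ A := integral_nonneg fun x => (exp_pos _).le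
  have hB0 : 0 ≤ B := integral_nonneg fun x => (exp_pos _).le
  set θ : ℝ := 1 / (2 - s) with hθ
  have h2s : (0:ℝ) < 2 - s := by linarith
  have hθ0 : 0 < θ := by positivity
  have hθ1 : θ < 1 := by rw [hθ, div_lt_one h2s]; linarith
  -- Hölder: I ≤ A^θ * B^(1-θ)
  have holder : I ≤ A ^ θ * B ^ (1 - θ) := by
    have hpq : (2 - s).HolderConjugate ((2 - s) / (1 - s)) := by
      rw [Real.holderConjugate_iff]
      constructor
      · linarith
      · field_simp; try ring
    have key := ENNReal.lintegral_mul_le_Lp_mul_Lq μ hpq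
      (f := fun x => ENNReal.ofReal (exp (θ * (s * u x))))
      (g := fun x => ENNReal.ofReal (exp ((1 - θ) * (2 * u x))))
      (by fun_prop) (by fun_prop)
    have hfg : ∀ x, ENNReal.ofReal (exp (θ * (s * u x))) *
        ENNReal.ofReal (exp ((1 - θ) * (2 * u x))) = ENNReal.ofReal (exp (u x)) := by
      intro x
      rw [← ENNReal.ofReal_mul (exp_pos _).le, ← exp_add]
      have : θ * (s * u x) + (1 - θ) * (2 * u x) = u x := by
        rw [hθ]; field_simp; try ring
      rw [this]
    have hfp : ∀ x, (ENNReal.ofReal (exp (θ * (s * u x)))) ^ (2 - s)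
        = ENNReal.ofReal (exp (s * u x)) := by
      intro x
      rw [ENNReal.ofReal_rpow_of_pos (exp_pos _), ← exp_mul]
      have : θ * (s * u x) * (2 - s) = s * u x := by rw [hθ]; field_simp; try ring
      rw [this]
    have hgq : ∀ x, (ENNReal.ofReal (exp ((1 - θ) * (2 * u x)))) ^ ((2 - s) / (1 - s))
        = ENNReal.ofReal (exp (2 * u x)) := by
      intro x
      rw [ENNReal.ofReal_rpow_of_pos (exp_pos _), ← exp_mul]
      have h1s : (0:ℝ) < 1 - s := by linarith
      have : (1 - θ) * (2 * u x) * ((2 - s) / (1 - s)) = 2 * u x := by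
        rw [hθ]; field_simp; try ring
      rw [this]
    simp only [Pi.mul_apply, hfg, hfp, hgq] at key
    have hIeq : ENNReal.ofReal I = ∫⁻ x, ENNReal.ofReal (exp (u x)) ∂μ :=
      ofReal_integral_eq_lintegral_ofReal heu (Filter.Eventually.of_forall fun x => (exp_pos _).le)
    have hAeq : ENNReal.ofReal A = ∫⁻ x, ENNReal.ofReal (exp (s * u x)) ∂μ :=
      ofReal_integral_eq_lintegral_ofReal hesu (Filter.Eventually.of_forall fun x => (exp_pos _).le)
    have hBeq : ENNReal.ofReal B = ∫⁻ x, ENNReal.ofReal (exp (2 * u x)) ∂μ :=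
      ofReal_integral_eq_lintegral_ofReal he2u (Filter.Eventually.of_forall fun x => (exp_pos _).le)
    rw [← hIeq, ← hAeq, ← hBeq] at key
    have h1q : 1 / ((2 - s) / (1 - s)) = 1 - θ := by rw [hθ]; field_simp; try ring
    rw [h1q, (hθ.symm : 1 / (2 - s) = θ)] at key
    have : ENNReal.ofReal I ≤ ENNReal.ofReal (A ^ θ * B ^ (1 - θ)) := by
      rw [ENNReal.ofReal_mul (rpow_nonneg hA0 _),
        ← ENNReal.ofReal_rpow_of_nonneg hA0 hθ0.le,
        ← ENNReal.ofReal_rpow_of_nonneg hB0 (by linarith)]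
      exact key
    exact (ENNReal.ofReal_le_ofReal_iff
      (mul_nonneg (rpow_nonneg hA0 _) (rpow_nonneg hB0 _))).mp this
  set C : ℝ := lam / (4 * n * b) with hCdef
  have hBle : B ≤ C * I ^ 2 := by
    have h := mul_le_mul_of_nonneg_left hconstraint hC.le
    have he : C * (4 * n * b / lam * B) = B := by rw [hCdef]; field_simp; try ring
    rw [he] at h
    exact h
  rcases eq_or_lt_of_le hI0 with hIz | hIpos
  · rw [← hIz]
    exact mul_nonneg (rpow_nonneg hC.le _) (rpow_nonneg hA0 _)
  · have step : I ≤ A ^ θ * (C * I ^ 2) ^ (1 - θ) := by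
      refine holder.trans (mul_le_mul_of_nonneg_left ?_ (rpow_nonneg hA0 _))
      exact rpow_le_rpow hB0 hBle (by linarith)
    have hexp : (C * I ^ 2) ^ (1 - θ) = C ^ (1 - θ) * I ^ (2 * (1 - θ)) := by
      rw [mul_rpow hC.le (by positivity), ← rpow_natCast I 2, ← rpow_mul hI0]
      norm_num
    rw [hexp] at step
    have hIp : 0 < I ^ (2 * (1 - θ)) := rpow_pos_of_pos hIpos _
    have hstep2 : I ^ (s * θ) ≤ A ^ θ * C ^ (1 - θ) := by
      have hsθ : s * θ = 1 - 2 * (1 - θ) := by rw [hθ]; field_simp; try ring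
      rw [hsθ, rpow_sub hIpos, rpow_one, div_le_iff₀ hIp, mul_assoc]
      exact step
    have hsθpos : 0 < s * θ := by positivity
    have final := rpow_le_rpow (rpow_nonneg hI0 _) hstep2
      (le_of_lt (by positivity : (0:ℝ) < 1 / (s * θ)))
    rw [← rpow_mul hI0, mul_one_div, div_self hsθpos.ne', rpow_one] at final
    rw [mul_rpow (rpow_nonneg hA0 _) (rpow_nonneg hC.le _), ← rpow_mul hA0,
      ← rpow_mul hC.le] at final
    have e1 : θ * (1 / (s * θ)) = 1 / s := by
      rw [hθ]; field_simp; try ring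
    have e2 : (1 - θ) * (1 / (s * θ)) = (1 - s) / s := by
      rw [hθ]; field_simp; try ring
    rw [e1, e2] at final
    calc I ≤ A ^ (1 / s) * C ^ ((1 - s) / s) := final
      _ = C ^ ((1 - s) / s) * A ^ (1 / s) := mul_comm _ _
end
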